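/- arXiv:2405.13262 — 4 statements merged into one kernel-verified Lean document; each statement's English description precedes it below -/
import Mathlib

section
/- Let G > 0, m₁ > 0, m₂ > 0, let μ and λ be nonzero real numbers, let v ∈ ℝ³ with μ² − λ²‖v‖² ≠ 0, and let S₁ ∈ ℝ³ be a nonzero vector. If the function Ψ₁₂(w) = w^{2/3} S₁ satisfies (μ² − λ²‖v‖²) · Ψ₁₂''(w) = −G(m₁+m₂) Ψ₁₂(w)/‖Ψ₁₂(w)‖³ for all w in some nonempty open interval of positive reals, then necessarily μ² − λ²‖v‖² > 0 and ‖S₁‖³ = 9G(m₁+m₂) / (2(μ² − λ²‖v‖²)). -/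
open scoped RealInnerProductSpace

/-- If the traveling wave `Ψ₁₂(w) = w^(2/3) • S₁` (with `S₁ ≠ 0`) solves the 2-body
relative difference companion wave equation on some nonempty open interval of positive reals,
then necessarily `μ² − λ²‖v‖² > 0` and `‖S₁‖³ = 9G(m₁+m₂)/(2(μ² − λ²‖v‖²))`. -/
theorem stmt_1 (G m₁ m₂ μ lam : ℝ) (hG : 0 < G) (hm₁ : 0 < m₁) (hm₂ : 0 < m₂)
    (hμ : μ ≠ 0) (hlam : lam ≠ 0) (v : EuclideanSpace ℝ (Fin 3))
    (hne : μ ^ 2 - lam ^ 2 * ‖v‖ ^ 2 ≠ 0)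
    (S₁ : EuclideanSpace ℝ (Fin 3)) (hS₁ : S₁ ≠ 0)
    (Ψ : ℝ → EuclideanSpace ℝ (Fin 3))
    (hΨ : ∀ w : ℝ, Ψ w = w ^ ((2 : ℝ) / 3) • S₁)
    (a b : ℝ) (hab : a < b) (ha : 0 ≤ a)
    (heq : ∀ w ∈ Set.Ioo a b,
      (μ ^ 2 - lam ^ 2 * ‖v‖ ^ 2) • iteratedDeriv 2 Ψ w
        = (-(G * (m₁ + m₂)) / ‖Ψ w‖ ^ 3) • Ψ w) :
    0 < μ ^ 2 - lam ^ 2 * ‖v‖ ^ 2 ∧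
      ‖S₁‖ ^ 3 = 9 * G * (m₁ + m₂) / (2 * (μ ^ 2 - lam ^ 2 * ‖v‖ ^ 2)) := by
  set c : ℝ := μ ^ 2 - lam ^ 2 * ‖v‖ ^ 2 with hc
  set K : ℝ := G * (m₁ + m₂) with hK
  have hKpos : 0 < K := by positivity
  set w₀ : ℝ := (a + b) / 2 with hw₀def
  have hw₀mem : w₀ ∈ Set.Ioo a b := ⟨by linarith, by linarith⟩
  have hw₀ : 0 < w₀ := lt_of_le_of_lt ha hw₀mem.1
  have hΨfun : Ψ = fun w : ℝ => w ^ ((2:ℝ)/3) • S₁ := funext hΨ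
  -- first derivative on a neighborhood of w₀
  have hd1 : deriv Ψ =ᶠ[nhds w₀]
      fun w : ℝ => (((2:ℝ)/3) * w ^ ((2:ℝ)/3 - 1)) • S₁ := by
    filter_upwards [Ioi_mem_nhds hw₀] with w hw
    have : HasDerivAt Ψ ((((2:ℝ)/3) * w ^ ((2:ℝ)/3 - 1)) • S₁) w := by
      rw [hΨfun]
      exact (Real.hasDerivAt_rpow_const (Or.inl (ne_of_gt hw))).smul_const S₁
    exact this.deriv
  have hd2 : HasDerivAt (fun w : ℝ => (((2:ℝ)/3) * w ^ ((2:ℝ)/3 - 1)) • S₁)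
      (((((2:ℝ)/3) * (((2:ℝ)/3 - 1) * w₀ ^ ((2:ℝ)/3 - 1 - 1)))) • S₁) w₀ :=
    ((Real.hasDerivAt_rpow_const (Or.inl hw₀.ne')).const_mul ((2:ℝ)/3)).smul_const S₁
  have hiter : iteratedDeriv 2 Ψ w₀ = ((-(2:ℝ)/9) * w₀ ^ (-(4:ℝ)/3)) • S₁ := by
    have h2 : iteratedDeriv 2 Ψ w₀ = deriv (deriv Ψ) w₀ := by
      rw [iteratedDeriv_succ, iteratedDeriv_one]
    rw [h2, hd1.deriv_eq, hd2.deriv]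
    norm_num
    congr 1
    ring
  have heqw := heq w₀ hw₀mem
  rw [hiter, hΨ w₀] at heqw
  have hnorm : ‖(w₀ ^ ((2:ℝ)/3)) • S₁‖ ^ 3 = w₀ ^ (2:ℝ) * ‖S₁‖ ^ 3 := by
    rw [norm_smul, Real.norm_eq_abs, abs_of_pos (Real.rpow_pos_of_pos hw₀ _), mul_pow,
      ← Real.rpow_natCast (w₀ ^ ((2:ℝ)/3)) 3, ← Real.rpow_mul hw₀.le]
    norm_num
  rw [hnorm, smul_smul, smul_smul] at heqw
  have hscal : c * ((-(2:ℝ)/9) * w₀ ^ (-(4:ℝ)/3))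
      = -K / (w₀ ^ (2:ℝ) * ‖S₁‖ ^ 3) * w₀ ^ ((2:ℝ)/3) :=
    smul_left_injective ℝ hS₁ heqw
  -- clean up rpow arithmetic
  have hn : (0:ℝ) < ‖S₁‖ ^ 3 := pow_pos (norm_pos_iff.mpr hS₁) 3
  have e1 : w₀ ^ ((2:ℝ)) = w₀ ^ ((2:ℝ)/3) * w₀ ^ ((4:ℝ)/3) := by
    rw [← Real.rpow_add hw₀]; norm_num
  have e2 : w₀ ^ (-(4:ℝ)/3) = (w₀ ^ ((4:ℝ)/3))⁻¹ := by
    rw [← Real.rpow_neg hw₀.le]; norm_num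
  set s := w₀ ^ ((2:ℝ)/3) with hs
  set t := w₀ ^ ((4:ℝ)/3) with ht
  have hspos : 0 < s := Real.rpow_pos_of_pos hw₀ _
  have htpos : 0 < t := Real.rpow_pos_of_pos hw₀ _
  rw [e1, e2] at hscal
  have key : c * ‖S₁‖ ^ 3 * 2 = 9 * K := by
    field_simp at hscal
    have h' : (c * ‖S₁‖ ^ 3 * 2) * (s * t) = (9 * K) * (s * t) := by
      linear_combination (-(s * t)) * hscal
    exact mul_right_cancel₀ (by positivity) h'
  have hcpos : 0 < c := by nlinarith [key, hKpos, hn]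
  refine ⟨hcpos, ?_⟩
  field_simp
  linarith [key]
end

section
/- Let G > 0, m₁ > 0, m₂ > 0, let μ, λ₁, λ₂ be nonzero real numbers, and let v ∈ ℝ³ satisfy μ² − λ₁²‖v‖² ≠ 0 and μ² − λ₂²‖v‖² ≠ 0. Define θ₁ = Gm₂/(μ² − λ₁²‖v‖²) and θ₂ = Gm₁/(μ² − λ₂²‖v‖²), and assume θ₁ + θ₂ > 0. Let S₂ ∈ ℝ³ be a nonzero vector such that, with S₁ := −(θ₁/θ₂)S₂, one has ‖S₁ − S₂‖³ = 9(θ₁+θ₂)/2. Then the functions Ψ₁(w) = −(θ₁/θ₂) w^{2/3} S₂ and Ψ₂(w) = w^{2/3} S₂ satisfy, for every w > 0, the 2-body companion wave system (μ² − λ₁²‖v‖²) Ψ₁''(w) = Gm₂(Ψ₂(w) − Ψ₁(w))/‖Ψ₂(w) − Ψ₁(w)‖³ and (μ² − λ₂²‖v‖²) Ψ₂''(w) = Gm₁(Ψ₁(w) − Ψ₂(w))/‖Ψ₂(w) − Ψ₁(w)‖³. -/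
open scoped RealInnerProductSpace

lemma aux_deriv2 (c : ℝ) (S : EuclideanSpace ℝ (Fin 3)) {w : ℝ} (hw : 0 < w) :
    iteratedDeriv 2 (fun x : ℝ => (c * x ^ ((2 : ℝ) / 3)) • S) w
      = (c * (-2 / 9) * w ^ (-(4 : ℝ) / 3)) • S := by
  set f : ℝ → EuclideanSpace ℝ (Fin 3) := fun x => (c * x ^ ((2 : ℝ) / 3)) • S with hf
  have hd1 : ∀ x : ℝ, 0 < x →
      HasDerivAt f ((c * (2 / 3) * x ^ (-(1 : ℝ) / 3)) • S) x := by
    intro x hx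
    have h0 : HasDerivAt (fun y : ℝ => y ^ ((2 : ℝ) / 3))
        ((2 / 3) * x ^ ((2 : ℝ) / 3 - 1)) x :=
      Real.hasDerivAt_rpow_const (Or.inl hx.ne')
    have h2 := (h0.const_mul c).smul_const S
    have he : (2 : ℝ) / 3 - 1 = -(1 : ℝ) / 3 := by norm_num
    rw [he] at h2
    rw [show c * (2 / 3) * x ^ (-(1 : ℝ) / 3) = c * (2 / 3 * x ^ (-(1 : ℝ) / 3)) by ring]
    exact h2
  have hev : deriv f =ᶠ[nhds w] fun x => (c * (2 / 3) * x ^ (-(1 : ℝ) / 3)) • S := by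
    filter_upwards [Ioi_mem_nhds hw] with x hx
    exact (hd1 x hx).deriv
  have h0 : HasDerivAt (fun y : ℝ => y ^ (-(1 : ℝ) / 3))
      ((-(1 : ℝ) / 3) * w ^ (-(1 : ℝ) / 3 - 1)) w :=
    Real.hasDerivAt_rpow_const (Or.inl hw.ne')
  have h2 := ((h0.const_mul (c * (2 / 3))).smul_const S)
  rw [iteratedDeriv_succ, iteratedDeriv_one, hev.deriv_eq, h2.deriv]
  have he : -(1 : ℝ) / 3 - 1 = -(4 : ℝ) / 3 := by norm_num
  rw [he]
  congr 1
  ring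


/-- With `θ₁ = Gm₂/(μ² − λ₁²‖v‖²)`, `θ₂ = Gm₁/(μ² − λ₂²‖v‖²)`, `θ₁ + θ₂ > 0`,
and a nonzero `S₂` with `S₁ := −(θ₁/θ₂)S₂` satisfying `‖S₁ − S₂‖³ = 9(θ₁+θ₂)/2`, the functions
`Ψ₁(w) = −(θ₁/θ₂) w^(2/3) S₂` and `Ψ₂(w) = w^(2/3) S₂` solve the 2-body companion wave system
for every `w > 0`. -/
theorem stmt_3 (G m₁ m₂ μ lam₁ lam₂ : ℝ) (hG : 0 < G) (hm₁ : 0 < m₁) (hm₂ : 0 < m₂)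
    (hμ : μ ≠ 0) (hlam₁ : lam₁ ≠ 0) (hlam₂ : lam₂ ≠ 0)
    (v : EuclideanSpace ℝ (Fin 3))
    (hne₁ : μ ^ 2 - lam₁ ^ 2 * ‖v‖ ^ 2 ≠ 0) (hne₂ : μ ^ 2 - lam₂ ^ 2 * ‖v‖ ^ 2 ≠ 0)
    (θ₁ θ₂ : ℝ)
    (hθ₁ : θ₁ = G * m₂ / (μ ^ 2 - lam₁ ^ 2 * ‖v‖ ^ 2))
    (hθ₂ : θ₂ = G * m₁ / (μ ^ 2 - lam₂ ^ 2 * ‖v‖ ^ 2))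
    (hθ : 0 < θ₁ + θ₂)
    (S₂ : EuclideanSpace ℝ (Fin 3)) (hS₂ : S₂ ≠ 0)
    (S₁ : EuclideanSpace ℝ (Fin 3)) (hS₁ : S₁ = -(θ₁ / θ₂) • S₂)
    (hnorm : ‖S₁ - S₂‖ ^ 3 = 9 * (θ₁ + θ₂) / 2)
    (Ψ₁ Ψ₂ : ℝ → EuclideanSpace ℝ (Fin 3))
    (hΨ₁ : ∀ w : ℝ, Ψ₁ w = (-(θ₁ / θ₂) * w ^ ((2 : ℝ) / 3)) • S₂)
    (hΨ₂ : ∀ w : ℝ, Ψ₂ w = w ^ ((2 : ℝ) / 3) • S₂) :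
    ∀ w : ℝ, 0 < w →
      (μ ^ 2 - lam₁ ^ 2 * ‖v‖ ^ 2) • iteratedDeriv 2 Ψ₁ w
          = (G * m₂ / ‖Ψ₂ w - Ψ₁ w‖ ^ 3) • (Ψ₂ w - Ψ₁ w) ∧
      (μ ^ 2 - lam₂ ^ 2 * ‖v‖ ^ 2) • iteratedDeriv 2 Ψ₂ w
          = (G * m₁ / ‖Ψ₂ w - Ψ₁ w‖ ^ 3) • (Ψ₁ w - Ψ₂ w) := by
  intro w hw
  have hθ₁0 : θ₁ ≠ 0 := by
    rw [hθ₁]; exact div_ne_zero (by positivity) hne₁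
  have hθ₂0 : θ₂ ≠ 0 := by
    rw [hθ₂]; exact div_ne_zero (by positivity) hne₂
  have hd₁ : μ ^ 2 - lam₁ ^ 2 * ‖v‖ ^ 2 = G * m₂ / θ₁ := by
    field_simp [hθ₁]
    rw [hθ₁]
    field_simp
  have hd₂ : μ ^ 2 - lam₂ ^ 2 * ‖v‖ ^ 2 = G * m₁ / θ₂ := by
    field_simp [hθ₂]
    rw [hθ₂]
    field_simp
  set k : ℝ := (θ₁ + θ₂) / θ₂ with hk
  -- difference formula
  have hdiff : Ψ₂ w - Ψ₁ w = (k * w ^ ((2 : ℝ) / 3)) • S₂ := by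
    rw [hΨ₁, hΨ₂]
    rw [← sub_smul]
    congr 1
    rw [hk]
    field_simp
    ring
  -- norm cubed
  have ht3 : (w ^ ((2 : ℝ) / 3)) ^ 3 = w ^ 2 := by
    rw [← Real.rpow_natCast (w ^ ((2:ℝ)/3)) 3, ← Real.rpow_mul hw.le,
      ← Real.rpow_natCast w 2]
    norm_num
  have hSnorm : ‖S₁ - S₂‖ = |k| * ‖S₂‖ := by
    rw [hS₁]
    have h1 : -(θ₁ / θ₂) • S₂ - S₂ = (-k) • S₂ := by
      have : -(θ₁ / θ₂) • S₂ - S₂ = (-(θ₁ / θ₂) - 1) • S₂ := by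
        rw [sub_smul, one_smul]
      rw [this]
      congr 1
      rw [hk]
      field_simp
      ring
    rw [h1, norm_smul, Real.norm_eq_abs, abs_neg]
  have hnormw : ‖Ψ₂ w - Ψ₁ w‖ ^ 3 = 9 * (θ₁ + θ₂) / 2 * w ^ 2 := by
    rw [hdiff, norm_smul]
    rw [Real.norm_eq_abs, abs_mul, abs_of_nonneg (Real.rpow_nonneg hw.le _)]
    have : (|k| * w ^ ((2:ℝ)/3) * ‖S₂‖) ^ 3
        = (|k| * ‖S₂‖) ^ 3 * (w ^ ((2:ℝ)/3)) ^ 3 := by ring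
    rw [this, ht3, ← hSnorm, hnorm]
  have htu : w ^ ((2 : ℝ) / 3) = w ^ 2 * w ^ (-(4 : ℝ) / 3) := by
    rw [← Real.rpow_natCast w 2, ← Real.rpow_add hw]
    norm_num
  have hΨ₂' : Ψ₂ = fun x : ℝ => ((1 : ℝ) * x ^ ((2 : ℝ) / 3)) • S₂ := by
    funext x; rw [hΨ₂]; ring_nf
  have hΨ₁' : Ψ₁ = fun x : ℝ => ((-(θ₁ / θ₂)) * x ^ ((2 : ℝ) / 3)) • S₂ := funext hΨ₁
  have hit₁ := aux_deriv2 (-(θ₁ / θ₂)) S₂ hw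
  have hit₂ := aux_deriv2 1 S₂ hw
  rw [← hΨ₁'] at hit₁
  rw [← hΨ₂'] at hit₂
  have hw0 : w ≠ 0 := hw.ne'
  have hu0 : w ^ (-(4:ℝ)/3) ≠ 0 := (Real.rpow_pos_of_pos hw _).ne'
  constructor
  · rw [hit₁, hnormw, hdiff, smul_smul, smul_smul]
    congr 1
    rw [htu, hk, hd₁]
    field_simp
  · rw [hit₂, hnormw, show Ψ₁ w - Ψ₂ w = -(Ψ₂ w - Ψ₁ w) by abel, hdiff,
      smul_neg, ← neg_smul, smul_smul, smul_smul]
    congr 1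
    rw [htu, hk, hd₂]
    field_simp
end

section
/- Let θ₁, θ₂ be nonzero real numbers and let S₁, S₂ ∈ ℝ³ with S₁ ≠ S₂ satisfy −(2/9)S₁ = θ₁(S₂ − S₁)/‖S₂ − S₁‖³ and −(2/9)S₂ = θ₂(S₁ − S₂)/‖S₂ − S₁‖³. Then θ₁ + θ₂ ≠ 0 and ‖S₁ − S₂‖³ = 9|θ₁ + θ₂|/2. -/
open scoped RealInnerProductSpace

/-- If nonzero `θ₁, θ₂` and `S₁ ≠ S₂` satisfy the algebraic system
`−(2/9)S₁ = θ₁(S₂ − S₁)/‖S₂ − S₁‖³` and `−(2/9)S₂ = θ₂(S₁ − S₂)/‖S₂ − S₁‖³`, then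
`θ₁ + θ₂ ≠ 0` and `‖S₁ − S₂‖³ = 9|θ₁ + θ₂|/2`. -/
theorem stmt_5 (θ₁ θ₂ : ℝ) (hθ₁ : θ₁ ≠ 0) (hθ₂ : θ₂ ≠ 0)
    (S₁ S₂ : EuclideanSpace ℝ (Fin 3)) (hS : S₁ ≠ S₂)
    (heq₁ : (-(2 / 9) : ℝ) • S₁ = (θ₁ / ‖S₂ - S₁‖ ^ 3) • (S₂ - S₁))
    (heq₂ : (-(2 / 9) : ℝ) • S₂ = (θ₂ / ‖S₂ - S₁‖ ^ 3) • (S₁ - S₂)) :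
    θ₁ + θ₂ ≠ 0 ∧ ‖S₁ - S₂‖ ^ 3 = 9 * |θ₁ + θ₂| / 2 := by
  have hd : S₁ - S₂ ≠ 0 := sub_ne_zero.mpr hS
  have hr : (0 : ℝ) < ‖S₂ - S₁‖ := by
    rw [norm_pos_iff]
    exact sub_ne_zero.mpr (Ne.symm hS)
  set r := ‖S₂ - S₁‖ with hrdef
  have hr3 : (0 : ℝ) < r ^ 3 := by positivity
  have key : ((-(2 / 9) : ℝ) - (-(θ₁ / r ^ 3) - θ₂ / r ^ 3)) • (S₁ - S₂) = 0 := by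
    have h := congrArg₂ (· - ·) heq₁ heq₂
    rw [← smul_sub] at h
    have h2 : (θ₁ / r ^ 3) • (S₂ - S₁) - (θ₂ / r ^ 3) • (S₁ - S₂)
        = (-(θ₁ / r ^ 3) - θ₂ / r ^ 3) • (S₁ - S₂) := by
      rw [show S₂ - S₁ = -(S₁ - S₂) by abel, smul_neg, sub_smul, neg_smul]
    rw [h2] at h
    rw [sub_smul, h, sub_self]
  rcases smul_eq_zero.mp key with hc | hv
  · have hc' : -(2 / 9 : ℝ) = -(θ₁ / r ^ 3) - θ₂ / r ^ 3 := by linarith [sub_eq_zero.mp hc]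
    have hsum : θ₁ + θ₂ = 2 / 9 * r ^ 3 := by
      field_simp at hc'
      have hmul : (θ₁ + θ₂) * r ^ 3 = (2 / 9 * r ^ 3) * r ^ 3 := by ring_nf; ring_nf at hc'; linear_combination (r ^ 3 / 9) * hc'
      exact mul_right_cancel₀ (ne_of_gt hr3) hmul
    have hpos : 0 < θ₁ + θ₂ := by rw [hsum]; nlinarith
    have hne : θ₁ + θ₂ ≠ 0 := ne_of_gt hpos
    refine ⟨hne, ?_⟩
    rw [abs_of_pos hpos]
    have hrr : ‖S₁ - S₂‖ = r := by rw [hrdef, norm_sub_rev]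
    rw [hrr]
    nlinarith
  · exact absurd hv hd
end

section
/- Let θ₁, θ₂ be nonzero real numbers and let S₁, S₂ ∈ ℝ³ with S₁ ≠ S₂ satisfy −(2/9)S₁ = θ₁(S₂ − S₁)/‖S₂ − S₁‖³ and −(2/9)S₂ = θ₂(S₁ − S₂)/‖S₂ − S₁‖³. Then θ₁ + θ₂ > 0; that is, no such solution with S₁ ≠ S₂ exists when θ₁ + θ₂ < 0. -/
open scoped RealInnerProductSpace

/-- If nonzero `θ₁, θ₂` and `S₁ ≠ S₂` satisfy the algebraic system
`−(2/9)S₁ = θ₁(S₂ − S₁)/‖S₂ − S₁‖³` and `−(2/9)S₂ = θ₂(S₁ − S₂)/‖S₂ − S₁‖³`, then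
`θ₁ + θ₂ > 0`; in particular no such solution with `S₁ ≠ S₂` exists when `θ₁ + θ₂ < 0`. -/
theorem stmt_7 (θ₁ θ₂ : ℝ) (hθ₁ : θ₁ ≠ 0) (hθ₂ : θ₂ ≠ 0)
    (S₁ S₂ : EuclideanSpace ℝ (Fin 3)) (hS : S₁ ≠ S₂)
    (heq₁ : (-(2 / 9) : ℝ) • S₁ = (θ₁ / ‖S₂ - S₁‖ ^ 3) • (S₂ - S₁))
    (heq₂ : (-(2 / 9) : ℝ) • S₂ = (θ₂ / ‖S₂ - S₁‖ ^ 3) • (S₁ - S₂)) :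
    0 < θ₁ + θ₂ := by
  set d := S₂ - S₁ with hd
  have hdne : d ≠ 0 := sub_ne_zero.mpr (Ne.symm hS)
  have hr : (0:ℝ) < ‖d‖ := norm_pos_iff.mpr hdne
  have hr3 : (0:ℝ) < ‖d‖ ^ 3 := by positivity
  have key : ((-(2/9) : ℝ) + (θ₁ + θ₂) / ‖d‖ ^ 3) • d = 0 := by
    have h := congrArg₂ (· - ·) heq₂ heq₁
    rw [← smul_sub] at h
    have h2 : (-(2/9) : ℝ) • d
        = (θ₂ / ‖d‖ ^ 3) • (S₁ - S₂) - (θ₁ / ‖d‖ ^ 3) • d := h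
    have h3 : S₁ - S₂ = -d := by rw [hd]; abel
    rw [h3, smul_neg] at h2
    rw [show ((θ₁+θ₂)/‖d‖^3:ℝ) = θ₁/‖d‖^3 + θ₂/‖d‖^3 from by ring, add_smul, add_smul, h2]
    module
  rcases smul_eq_zero.mp key with hc | hc
  · have : θ₁ + θ₂ = (2/9) * ‖d‖ ^ 3 := by
      field_simp at hc; linarith
    rw [this]; positivity
  · exact absurd hc hdne
end
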